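/- For every integer n ≥ 1: (i) every (n,n,n)-fractionally balanced tripartite hypergraph contains a matching of size ⌈n/2⌉, and (ii) there exists an (n,n,n)-fractionally balanced tripartite hypergraph whose matching number equals ⌈n/2⌉. -/

import Mathlib

/-- `f` is a balanced weight function on the tripartite hypergraph `H`:
nonnegative, vanishing outside `H`, with constant degrees on each of the three sides. -/
def TriBalanced {a b c : ℕ} (H : Finset (Fin a × Fin b × Fin c))
    (f : Fin a × Fin b × Fin c → ℝ) : Prop :=
  (∀ e, 0 ≤ f e) ∧ (∀ e, e ∉ H → f e = 0) ∧
    (∀ v w : Fin a, (∑ e : Fin a × Fin b × Fin c, if e.1 = v then f e else 0) =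
      ∑ e : Fin a × Fin b × Fin c, if e.1 = w then f e else 0) ∧
    (∀ v w : Fin b, (∑ e : Fin a × Fin b × Fin c, if e.2.1 = v then f e else 0) =
      ∑ e : Fin a × Fin b × Fin c, if e.2.1 = w then f e else 0) ∧
    (∀ v w : Fin c, (∑ e : Fin a × Fin b × Fin c, if e.2.2 = v then f e else 0) =
      ∑ e : Fin a × Fin b × Fin c, if e.2.2 = w then f e else 0)

/-- `H` is an `(a,b,c)`-fractionally balanced tripartite hypergraph. -/
def TriFracBalanced {a b c : ℕ} (H : Finset (Fin a × Fin b × Fin c)) : Prop :=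
  ∃ f, TriBalanced H f ∧ f ≠ 0

/-- `M` is a matching in `H`: a set of edges of `H` any two distinct members of
which differ in all three coordinates. -/
def TriMatching {a b c : ℕ} (H M : Finset (Fin a × Fin b × Fin c)) : Prop :=
  M ⊆ H ∧ ∀ e ∈ M, ∀ f ∈ M, e ≠ f → e.1 ≠ f.1 ∧ e.2.1 ≠ f.2.1 ∧ e.2.2 ≠ f.2.2

open Finset

namespace BmNnnAux

attribute [local instance] Classical.propDecidable

variable {n : ℕ}

/-- all three coordinates differ -/
def dist3 (e f : Fin n × Fin n × Fin n) : Prop :=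
  e.1 ≠ f.1 ∧ e.2.1 ≠ f.2.1 ∧ e.2.2 ≠ f.2.2

lemma dist3_symm {e f : Fin n × Fin n × Fin n} (h : dist3 e f) : dist3 f e :=
  ⟨h.1.symm, h.2.1.symm, h.2.2.symm⟩

lemma not_dist3 {e f : Fin n × Fin n × Fin n} (h : ¬ dist3 e f) :
    e.1 = f.1 ∨ e.2.1 = f.2.1 ∨ e.2.2 = f.2.2 := by
  by_contra hc
  push_neg at hc
  exact h ⟨hc.1, hc.2.1, hc.2.2⟩

lemma not_dist3' {e f : Fin n × Fin n × Fin n}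
    (h : e.1 = f.1 ∨ e.2.1 = f.2.1 ∨ e.2.2 = f.2.2) : ¬ dist3 e f := fun hd => by
  rcases h with h | h | h
  exacts [hd.1 h, hd.2.1 h, hd.2.2 h]

/-- A set of edges all passing through one vertex has weight at most the degree bound. -/
lemma sum_le_deg (w : Fin n × Fin n × Fin n → ℝ) (d : ℝ) (hw0 : ∀ e, 0 ≤ w e)
    (π : Fin n × Fin n × Fin n → Fin n)
    (hdeg : ∀ v, (∑ e : Fin n × Fin n × Fin n, if π e = v then w e else 0) ≤ d)
    (α : Fin n) (S : Finset (Fin n × Fin n × Fin n)) (hS : ∀ f ∈ S, π f = α) :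
    ∑ f ∈ S, w f ≤ d := by
  have h1 : ∑ f ∈ S, w f = ∑ f ∈ S, if π f = α then w f else 0 :=
    Finset.sum_congr rfl fun f hf => by rw [if_pos (hS f hf)]
  have h2 : (∑ f ∈ S, if π f = α then w f else 0)
      ≤ ∑ f : Fin n × Fin n × Fin n, if π f = α then w f else 0 := by
    apply Finset.sum_le_sum_of_subset_of_nonneg (Finset.subset_univ S)
    intro f _ _
    by_cases h : π f = α <;> simp [h, hw0 f]
  rw [h1]
  exact h2.trans (hdeg α)

lemma indSum (H : Finset (Fin n × Fin n × Fin n)) (w : Fin n × Fin n × Fin n → ℝ) (d : ℝ)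
    (hw0 : ∀ e, 0 ≤ w e) (S : Finset (Fin n)) (π : Fin n × Fin n × Fin n → Fin n)
    (hdeg : ∀ v, (∑ e : Fin n × Fin n × Fin n, if π e = v then w e else 0) ≤ d) :
    (∑ f ∈ H, if π f ∈ S then w f else 0) ≤ (S.card : ℝ) * d := by
  have h1 : (∑ f ∈ H, if π f ∈ S then w f else 0)
      ≤ ∑ f : Fin n × Fin n × Fin n, if π f ∈ S then w f else 0 := by
    apply Finset.sum_le_sum_of_subset_of_nonneg (Finset.subset_univ H)
    intro f _ _
    by_cases h : π f ∈ S <;> simp [h, hw0 f]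
  have h2 : (∑ f : Fin n × Fin n × Fin n, if π f ∈ S then w f else 0)
      = ∑ a ∈ S, ∑ f : Fin n × Fin n × Fin n, if π f = a then w f else 0 := by
    rw [Finset.sum_comm]
    apply Finset.sum_congr rfl
    intro f _
    have : (∑ a ∈ S, if π f = a then w f else 0) = if π f ∈ S then w f else 0 :=
      Finset.sum_ite_eq S (π f) (fun _ => w f)
    rw [this]
  have h3 : (∑ a ∈ S, ∑ f : Fin n × Fin n × Fin n, if π f = a then w f else 0)
      ≤ ∑ _a ∈ S, d := Finset.sum_le_sum fun a _ => hdeg a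
  rw [Finset.sum_const, nsmul_eq_mul] at h3
  exact h1.trans (h2 ▸ h3)

/-- The key local lemma: an intersecting block with a maximum-weight edge `e`. -/
lemma blockB (w : Fin n × Fin n × Fin n → ℝ) (d : ℝ)
    (hw0 : ∀ e, 0 ≤ w e) (hd0 : 0 ≤ d)
    (hdA : ∀ v, (∑ e : Fin n × Fin n × Fin n, if e.1 = v then w e else 0) ≤ d)
    (hdB : ∀ v, (∑ e : Fin n × Fin n × Fin n, if e.2.1 = v then w e else 0) ≤ d)
    (hdC : ∀ v, (∑ e : Fin n × Fin n × Fin n, if e.2.2 = v then w e else 0) ≤ d)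
    (G : Finset (Fin n × Fin n × Fin n)) (a b c : Fin n) (heG : (a, b, c) ∈ G)
    (hmax : ∀ f ∈ G, w f ≤ w (a, b, c))
    (hint : ∀ f ∈ G, ∀ g ∈ G, f ≠ g → ¬ dist3 f g)
    (hmeet : ∀ f ∈ G, ¬ dist3 (a, b, c) f) :
    ∑ f ∈ G, w f * (2 - ((if f.1 = a then (1:ℝ) else 0) + (if f.2.1 = b then (1:ℝ) else 0)
      + (if f.2.2 = c then (1:ℝ) else 0))) ≤ d := by
  classical
  set F : Fin n × Fin n × Fin n → ℝ := fun f =>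
    w f * (2 - ((if f.1 = a then (1:ℝ) else 0) + (if f.2.1 = b then (1:ℝ) else 0)
      + (if f.2.2 = c then (1:ℝ) else 0))) with hF
  set Sa := G.filter (fun f => f.1 = a ∧ f.2.1 ≠ b ∧ f.2.2 ≠ c) with hSa
  set Sb := G.filter (fun f => f.1 ≠ a ∧ f.2.1 = b ∧ f.2.2 ≠ c) with hSb
  set Sc := G.filter (fun f => f.1 ≠ a ∧ f.2.1 ≠ b ∧ f.2.2 = c) with hSc
  have hSaG : Sa ⊆ G := Finset.filter_subset _ _
  have hSbG : Sb ⊆ G := Finset.filter_subset _ _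
  have hScG : Sc ⊆ G := Finset.filter_subset _ _
  have henotin : (a, b, c) ∉ Sa ∪ Sb ∪ Sc := by
    intro h
    rcases Finset.mem_union.mp h with h | h
    · rcases Finset.mem_union.mp h with h | h
      · exact (Finset.mem_filter.mp h).2.2.1 rfl
      · exact (Finset.mem_filter.mp h).2.1 rfl
    · exact (Finset.mem_filter.mp h).2.1 rfl
  have hUG : insert (a, b, c) (Sa ∪ Sb ∪ Sc) ⊆ G := by
    apply Finset.insert_subset heG
    exact Finset.union_subset (Finset.union_subset hSaG hSbG) hScG
  -- split the sum
  have hsplit : ∑ f ∈ G, F f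
      = (∑ f ∈ G \ insert (a, b, c) (Sa ∪ Sb ∪ Sc), F f)
        + ∑ f ∈ insert (a, b, c) (Sa ∪ Sb ∪ Sc), F f := (Finset.sum_sdiff hUG).symm
  have hnonpos : (∑ f ∈ G \ insert (a, b, c) (Sa ∪ Sb ∪ Sc), F f) ≤ 0 := by
    apply Finset.sum_nonpos
    intro f hf
    obtain ⟨hfG, hfU⟩ := Finset.mem_sdiff.mp hf
    obtain ⟨x, y, z⟩ := f
    by_cases c1 : x = a <;> by_cases c2 : y = b <;> by_cases c3 : z = c
    · exfalso; subst c1; subst c2; subst c3; exact hfU (Finset.mem_insert_self _ _)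
    · rw [hF]; simp only [if_pos c1, if_pos c2, if_neg c3]; norm_num
    · rw [hF]; simp only [if_pos c1, if_neg c2, if_pos c3]; norm_num
    · exfalso
      exact hfU (Finset.mem_insert_of_mem (Finset.mem_union_left _ (Finset.mem_union_left _
        (Finset.mem_filter.mpr ⟨hfG, c1, c2, c3⟩))))
    · rw [hF]; simp only [if_neg c1, if_pos c2, if_pos c3]; norm_num
    · exfalso
      exact hfU (Finset.mem_insert_of_mem (Finset.mem_union_left _ (Finset.mem_union_right _
        (Finset.mem_filter.mpr ⟨hfG, c1, c2, c3⟩))))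
    · exfalso
      exact hfU (Finset.mem_insert_of_mem (Finset.mem_union_right _
        (Finset.mem_filter.mpr ⟨hfG, c1, c2, c3⟩)))
    · exfalso
      rcases not_dist3 (hmeet _ hfG) with h | h | h
      · exact c1 h.symm
      · exact c2 h.symm
      · exact c3 h.symm
  have hdab : Disjoint Sa Sb := by
    rw [Finset.disjoint_left]
    intro f hfa hfb
    exact (Finset.mem_filter.mp hfb).2.1 (Finset.mem_filter.mp hfa).2.1
  have hdac : Disjoint Sa Sc := by
    rw [Finset.disjoint_left]
    intro f hfa hfc
    exact (Finset.mem_filter.mp hfc).2.1 (Finset.mem_filter.mp hfa).2.1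
  have hdbc : Disjoint Sb Sc := by
    rw [Finset.disjoint_left]
    intro f hfb hfc
    exact (Finset.mem_filter.mp hfc).2.2.1 (Finset.mem_filter.mp hfb).2.2.1
  have hUsum : ∑ f ∈ insert (a, b, c) (Sa ∪ Sb ∪ Sc), F f
      = - w (a, b, c) + ((∑ f ∈ Sa, w f) + (∑ f ∈ Sb, w f) + (∑ f ∈ Sc, w f)) := by
    rw [Finset.sum_insert henotin]
    have he : F (a, b, c) = - w (a, b, c) := by
      rw [hF]; norm_num
    have hcongr : ∑ f ∈ Sa ∪ Sb ∪ Sc, F f = ∑ f ∈ Sa ∪ Sb ∪ Sc, w f := by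
      apply Finset.sum_congr rfl
      intro f hf
      rcases Finset.mem_union.mp hf with h | h
      · rcases Finset.mem_union.mp h with h | h
        · obtain ⟨-, h1, h2, h3⟩ := Finset.mem_filter.mp h
          rw [hF]; simp only [if_pos h1, if_neg h2, if_neg h3]; ring
        · obtain ⟨-, h1, h2, h3⟩ := Finset.mem_filter.mp h
          rw [hF]; simp only [if_neg h1, if_pos h2, if_neg h3]; ring
      · obtain ⟨-, h1, h2, h3⟩ := Finset.mem_filter.mp h
        rw [hF]; simp only [if_neg h1, if_neg h2, if_pos h3]; ring
    have hdisj2 : Disjoint (Sa ∪ Sb) Sc := Finset.disjoint_union_left.mpr ⟨hdac, hdbc⟩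
    rw [he, hcongr, Finset.sum_union hdisj2, Finset.sum_union hdab]
  -- nonnegativity facts
  have hwa0 : 0 ≤ ∑ f ∈ Sa, w f := Finset.sum_nonneg fun f _ => hw0 f
  have hwb0 : 0 ≤ ∑ f ∈ Sb, w f := Finset.sum_nonneg fun f _ => hw0 f
  have hwc0 : 0 ≤ ∑ f ∈ Sc, w f := Finset.sum_nonneg fun f _ => hw0 f
  have hwe0 : 0 ≤ w (a, b, c) := hw0 _
  -- pairwise meeting structure
  have meet_ab : ∀ f ∈ Sa, ∀ g ∈ Sb, f.2.2 = g.2.2 := by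
    intro f hf g hg
    obtain ⟨hfG, pf1, pf2, pf3⟩ := Finset.mem_filter.mp hf
    obtain ⟨hgG, pg1, pg2, pg3⟩ := Finset.mem_filter.mp hg
    have hne : f ≠ g := fun h => pg1 (h ▸ pf1)
    rcases not_dist3 (hint f hfG g hgG hne) with h | h | h
    · exact absurd (h ▸ pf1 : g.1 = a) pg1
    · exact absurd (h.symm ▸ pg2 : f.2.1 = b) pf2
    · exact h
  have meet_ac : ∀ f ∈ Sa, ∀ h ∈ Sc, f.2.1 = h.2.1 := by
    intro f hf h hh
    obtain ⟨hfG, pf1, pf2, pf3⟩ := Finset.mem_filter.mp hf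
    obtain ⟨hhG, ph1, ph2, ph3⟩ := Finset.mem_filter.mp hh
    have hne : f ≠ h := fun heq => ph1 (heq ▸ pf1)
    rcases not_dist3 (hint f hfG h hhG hne) with h1 | h1 | h1
    · exact absurd (h1 ▸ pf1 : h.1 = a) ph1
    · exact h1
    · exact absurd (h1.symm ▸ ph3 : f.2.2 = c) pf3
  have meet_bc : ∀ g ∈ Sb, ∀ h ∈ Sc, g.1 = h.1 := by
    intro g hg h hh
    obtain ⟨hgG, pg1, pg2, pg3⟩ := Finset.mem_filter.mp hg
    obtain ⟨hhG, ph1, ph2, ph3⟩ := Finset.mem_filter.mp hh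
    have hne : g ≠ h := fun heq => ph2 (heq ▸ pg2)
    rcases not_dist3 (hint g hgG h hhG hne) with h1 | h1 | h1
    · exact h1
    · exact absurd (h1 ▸ pg2 : h.2.1 = b) ph2
    · exact absurd (h1.symm ▸ ph3 : g.2.2 = c) pg3
  -- now the case analysis; it suffices to bound the U-sum by d
  rw [hsplit, hUsum]
  have target : (∑ f ∈ Sa, w f) + (∑ f ∈ Sb, w f) + (∑ f ∈ Sc, w f) ≤ d + w (a, b, c) := by
    by_cases hb : Sb.Nonempty
    · by_cases hc : Sc.Nonempty
      · by_cases ha : Sa.Nonempty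
        · -- all three nonempty
          obtain ⟨f₀, hf₀⟩ := ha
          obtain ⟨g₀, hg₀⟩ := hb
          obtain ⟨h₀, hh₀⟩ := hc
          -- Sa and Sb all pass through the third coordinate of g₀
          have hγ : ∀ f ∈ Sa ∪ Sb, f.2.2 = g₀.2.2 := by
            intro f hf
            rcases Finset.mem_union.mp hf with h | h
            · exact meet_ab f h g₀ hg₀
            · exact (meet_ab f₀ hf₀ f h).symm.trans (meet_ab f₀ hf₀ g₀ hg₀)
          have hab : (∑ f ∈ Sa, w f) + (∑ f ∈ Sb, w f) ≤ d := by
            rw [← Finset.sum_union hdab]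
            exact sum_le_deg w d hw0 (fun f => f.2.2) hdC (g₀.2.2) _ hγ
          -- Sc is a single edge, of weight at most w (a,b,c)
          have hsc1 : ∀ h ∈ Sc, h = (g₀.1, f₀.2.1, c) := by
            intro h hh
            have e1 : h.1 = g₀.1 := (meet_bc g₀ hg₀ h hh).symm
            have e2 : h.2.1 = f₀.2.1 := (meet_ac f₀ hf₀ h hh).symm
            have e3 : h.2.2 = c := (Finset.mem_filter.mp hh).2.2.2
            obtain ⟨x, y, z⟩ := h
            simp only [Prod.mk.injEq]
            exact ⟨e1, e2, e3⟩
          have hsub : Sc ⊆ {(g₀.1, f₀.2.1, c)} := by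
            intro h hh
            rw [Finset.mem_singleton]
            exact hsc1 h hh
          have ht₀G : (g₀.1, f₀.2.1, c) ∈ G := (hsc1 h₀ hh₀) ▸ (hScG hh₀)
          have hc1 : (∑ f ∈ Sc, w f) ≤ w (g₀.1, f₀.2.1, c) := by
            have := Finset.sum_le_sum_of_subset_of_nonneg hsub
              (fun f _ _ => hw0 f)
            simpa using this
          have hc2 : w (g₀.1, f₀.2.1, c) ≤ w (a, b, c) := hmax _ ht₀G
          linarith
        · -- Sa empty : Sb, Sc share the first coordinate
          have ha0 : (∑ f ∈ Sa, w f) = 0 := by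
            rw [Finset.not_nonempty_iff_eq_empty.mp ha, Finset.sum_empty]
          obtain ⟨h₀, hh₀⟩ := hc
          have hα : ∀ f ∈ Sb ∪ Sc, f.1 = h₀.1 := by
            intro f hf
            rcases Finset.mem_union.mp hf with h | h
            · exact meet_bc f h h₀ hh₀
            · obtain ⟨g₀, hg₀⟩ := hb
              exact (meet_bc g₀ hg₀ f h).symm.trans (meet_bc g₀ hg₀ h₀ hh₀)
          have hbc : (∑ f ∈ Sb, w f) + (∑ f ∈ Sc, w f) ≤ d := by
            rw [← Finset.sum_union hdbc]
            exact sum_le_deg w d hw0 (fun f => f.1) hdA (h₀.1) _ hα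
          linarith
      · -- Sc empty
        have hc0 : (∑ f ∈ Sc, w f) = 0 := by
          rw [Finset.not_nonempty_iff_eq_empty.mp hc, Finset.sum_empty]
        by_cases ha : Sa.Nonempty
        · obtain ⟨f₀, hf₀⟩ := ha
          obtain ⟨g₀, hg₀⟩ := hb
          have hγ : ∀ f ∈ Sa ∪ Sb, f.2.2 = g₀.2.2 := by
            intro f hf
            rcases Finset.mem_union.mp hf with h | h
            · exact meet_ab f h g₀ hg₀
            · exact (meet_ab f₀ hf₀ f h).symm.trans (meet_ab f₀ hf₀ g₀ hg₀)
          have hab : (∑ f ∈ Sa, w f) + (∑ f ∈ Sb, w f) ≤ d := by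
            rw [← Finset.sum_union hdab]
            exact sum_le_deg w d hw0 (fun f => f.2.2) hdC (g₀.2.2) _ hγ
          linarith
        · have ha0 : (∑ f ∈ Sa, w f) = 0 := by
            rw [Finset.not_nonempty_iff_eq_empty.mp ha, Finset.sum_empty]
          have hbb : (∑ f ∈ Sb, w f) ≤ d :=
            sum_le_deg w d hw0 (fun f => f.2.1) hdB b _
              (fun f hf => (Finset.mem_filter.mp hf).2.2.1)
          linarith
    · have hb0 : (∑ f ∈ Sb, w f) = 0 := by
        rw [Finset.not_nonempty_iff_eq_empty.mp hb, Finset.sum_empty]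
      by_cases hc : Sc.Nonempty
      · by_cases ha : Sa.Nonempty
        · obtain ⟨f₀, hf₀⟩ := ha
          obtain ⟨h₀, hh₀⟩ := hc
          have hβ : ∀ f ∈ Sa ∪ Sc, f.2.1 = h₀.2.1 := by
            intro f hf
            rcases Finset.mem_union.mp hf with h | h
            · exact meet_ac f h h₀ hh₀
            · exact (meet_ac f₀ hf₀ f h).symm.trans (meet_ac f₀ hf₀ h₀ hh₀)
          have hac : (∑ f ∈ Sa, w f) + (∑ f ∈ Sc, w f) ≤ d := by
            rw [← Finset.sum_union hdac]
            exact sum_le_deg w d hw0 (fun f => f.2.1) hdB (h₀.2.1) _ hβ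
          linarith
        · have ha0 : (∑ f ∈ Sa, w f) = 0 := by
            rw [Finset.not_nonempty_iff_eq_empty.mp ha, Finset.sum_empty]
          have hcc : (∑ f ∈ Sc, w f) ≤ d :=
            sum_le_deg w d hw0 (fun f => f.2.2) hdC c _
              (fun f hf => (Finset.mem_filter.mp hf).2.2.2)
          linarith
      · have hc0 : (∑ f ∈ Sc, w f) = 0 := by
          rw [Finset.not_nonempty_iff_eq_empty.mp hc, Finset.sum_empty]
        have haa : (∑ f ∈ Sa, w f) ≤ d :=
          sum_le_deg w d hw0 (fun f => f.1) hdA a _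
            (fun f hf => (Finset.mem_filter.mp hf).2.1)
        linarith
  linarith

/-- Core: a 3-partite hypergraph with a fractional matching of degree at most `d`
at every vertex contains a matching `M` with total weight at most `2 |M| d`. -/
theorem core (H : Finset (Fin n × Fin n × Fin n)) (w : Fin n × Fin n × Fin n → ℝ) (d : ℝ)
    (hw0 : ∀ e, 0 ≤ w e) (hsupp : ∀ e, e ∉ H → w e = 0) (hd0 : 0 ≤ d)
    (hdA : ∀ v, (∑ e : Fin n × Fin n × Fin n, if e.1 = v then w e else 0) ≤ d)
    (hdB : ∀ v, (∑ e : Fin n × Fin n × Fin n, if e.2.1 = v then w e else 0) ≤ d)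
    (hdC : ∀ v, (∑ e : Fin n × Fin n × Fin n, if e.2.2 = v then w e else 0) ≤ d) :
    ∃ M : Finset (Fin n × Fin n × Fin n), TriMatching H M ∧
      (∑ e ∈ H, w e) ≤ 2 * (M.card : ℝ) * d := by
  classical
  -- choose a maximum matching, of maximum weight among those
  set P := H.powerset.filter (fun N => TriMatching H N) with hP
  have hPmem : ∀ N, N ∈ P ↔ TriMatching H N := by
    intro N
    constructor
    · intro h; exact (Finset.mem_filter.mp h).2
    · intro h; exact Finset.mem_filter.mpr ⟨Finset.mem_powerset.mpr h.1, h⟩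
  have hPne : P.Nonempty :=
    ⟨∅, (hPmem ∅).mpr ⟨Finset.empty_subset H, fun e he => absurd he (Finset.notMem_empty e)⟩⟩
  obtain ⟨M₀, hM₀P, hM₀max⟩ := Finset.exists_max_image P Finset.card hPne
  set m := M₀.card with hm
  set P2 := P.filter (fun N => N.card = m) with hP2
  have hP2ne : P2.Nonempty := ⟨M₀, Finset.mem_filter.mpr ⟨hM₀P, rfl⟩⟩
  obtain ⟨M, hMP2, hMwt⟩ := Finset.exists_max_image P2 (fun N => ∑ e ∈ N, w e) hP2ne
  have hM : TriMatching H M := (hPmem M).mp (Finset.mem_filter.mp hMP2).1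
  have hMcard : M.card = m := (Finset.mem_filter.mp hMP2).2
  have hcard : ∀ N, TriMatching H N → N.card ≤ m := fun N hN => hM₀max N ((hPmem N).mpr hN)
  have hwt : ∀ N, TriMatching H N → N.card = m → (∑ e ∈ N, w e) ≤ ∑ e ∈ M, w e :=
    fun N hN hNc => hMwt N (Finset.mem_filter.mpr ⟨(hPmem N).mpr hN, hNc⟩)
  -- basic facts about the maximum matching
  have factA : ∀ g ∈ H, ∃ e ∈ M, ¬ dist3 e g := by
    intro g hg
    by_contra hcon
    push_neg at hcon
    have hcomp : ∀ e ∈ M, dist3 e g := hcon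
    have hgM : g ∉ M := fun h => (hcomp g h).1 rfl
    have hmatch : TriMatching H (insert g M) := by
      constructor
      · exact Finset.insert_subset hg hM.1
      · intro x hx y hy hxy
        rcases Finset.mem_insert.mp hx with hx1 | hx1 <;>
          rcases Finset.mem_insert.mp hy with hy1 | hy1
        · exact absurd (hx1.trans hy1.symm) hxy
        · subst hx1; exact dist3_symm (hcomp y hy1)
        · subst hy1; exact hcomp x hx1
        · exact hM.2 x hx1 y hy1 hxy
    have := hcard _ hmatch
    rw [Finset.card_insert_of_notMem hgM, hMcard] at this
    omega
  have factB : ∀ e ∈ M, ∀ g ∈ H, (∀ e2 ∈ M, e2 ≠ e → dist3 e2 g) → w g ≤ w e := by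
    intro e he g hg hcomp
    by_cases hge : g = e
    · subst hge; exact le_refl _
    have hgM : g ∉ M := by
      intro h
      exact (hcomp g h hge).1 rfl
    have hgMe : g ∉ M.erase e := fun h => hgM (Finset.mem_of_mem_erase h)
    have hmatch : TriMatching H (insert g (M.erase e)) := by
      constructor
      · exact Finset.insert_subset hg ((Finset.erase_subset _ _).trans hM.1)
      · intro x hx y hy hxy
        rcases Finset.mem_insert.mp hx with hx1 | hx1 <;>
          rcases Finset.mem_insert.mp hy with hy1 | hy1
        · exact absurd (hx1.trans hy1.symm) hxy
        · subst hx1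
          exact dist3_symm (hcomp y (Finset.mem_of_mem_erase hy1) (Finset.ne_of_mem_erase hy1))
        · subst hy1
          exact hcomp x (Finset.mem_of_mem_erase hx1) (Finset.ne_of_mem_erase hx1)
        · exact hM.2 x (Finset.mem_of_mem_erase hx1) y (Finset.mem_of_mem_erase hy1) hxy
    have hpos : 0 < M.card := Finset.card_pos.mpr ⟨e, he⟩
    have hcardeq : (insert g (M.erase e)).card = m := by
      rw [Finset.card_insert_of_notMem hgMe, Finset.card_erase_of_mem he]
      omega
    have hsum := hwt _ hmatch hcardeq
    rw [Finset.sum_insert hgMe, Finset.sum_erase_eq_sub he] at hsum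
    linarith
  have factC : ∀ e ∈ M, ∀ f ∈ H, ∀ g ∈ H, f ≠ g →
      (∀ e2 ∈ M, e2 ≠ e → dist3 e2 f) → (∀ e2 ∈ M, e2 ≠ e → dist3 e2 g) → ¬ dist3 f g := by
    intro e he f hf g hg hfg hcf hcg hd
    by_cases hfe : f = e
    · subst hfe
      have hgM : g ∉ M := by
        intro h
        by_cases hgf : g = f
        · exact hfg hgf.symm
        · exact (hcg g h hgf).1 rfl
      have hmatch : TriMatching H (insert g M) := by
        constructor
        · exact Finset.insert_subset hg hM.1
        · intro x hx y hy hxy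
          rcases Finset.mem_insert.mp hx with hx1 | hx1 <;>
            rcases Finset.mem_insert.mp hy with hy1 | hy1
          · exact absurd (hx1.trans hy1.symm) hxy
          · subst hx1
            by_cases hyf : y = f
            · subst hyf; exact dist3_symm hd
            · exact dist3_symm (hcg y hy1 hyf)
          · subst hy1
            by_cases hxf : x = f
            · subst hxf; exact hd
            · exact hcg x hx1 hxf
          · exact hM.2 x hx1 y hy1 hxy
      have := hcard _ hmatch
      rw [Finset.card_insert_of_notMem hgM, hMcard] at this
      omega
    by_cases hge : g = e
    · subst hge
      have hfM : f ∉ M := by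
        intro h
        exact (hcf f h hfe).1 rfl
      have hmatch : TriMatching H (insert f M) := by
        constructor
        · exact Finset.insert_subset hf hM.1
        · intro x hx y hy hxy
          rcases Finset.mem_insert.mp hx with hx1 | hx1 <;>
            rcases Finset.mem_insert.mp hy with hy1 | hy1
          · exact absurd (hx1.trans hy1.symm) hxy
          · subst hx1
            by_cases hyg : y = g
            · subst hyg; exact hd
            · exact dist3_symm (hcf y hy1 hyg)
          · subst hy1
            by_cases hxg : x = g
            · subst hxg; exact dist3_symm hd
            · exact hcf x hx1 hxg
          · exact hM.2 x hx1 y hy1 hxy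
      have := hcard _ hmatch
      rw [Finset.card_insert_of_notMem hfM, hMcard] at this
      omega
    · have hfM : f ∉ M.erase e := by
        intro h
        exact (hcf f (Finset.mem_of_mem_erase h) (Finset.ne_of_mem_erase h)).1 rfl
      have hgM : g ∉ M.erase e := by
        intro h
        exact (hcg g (Finset.mem_of_mem_erase h) (Finset.ne_of_mem_erase h)).1 rfl
      have hfgM : f ∉ insert g (M.erase e) := by
        intro h
        rcases Finset.mem_insert.mp h with h1 | h1
        · exact hfg h1
        · exact hfM h1
      have hmatch : TriMatching H (insert f (insert g (M.erase e))) := by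
        constructor
        · exact Finset.insert_subset hf (Finset.insert_subset hg
            ((Finset.erase_subset _ _).trans hM.1))
        · intro x hx y hy hxy
          rcases Finset.mem_insert.mp hx with hx1 | hx1
          · subst hx1
            rcases Finset.mem_insert.mp hy with hy1 | hy1
            · exact absurd hy1.symm hxy
            · rcases Finset.mem_insert.mp hy1 with hy2 | hy2
              · subst hy2; exact hd
              · exact dist3_symm (hcf y (Finset.mem_of_mem_erase hy2)
                  (Finset.ne_of_mem_erase hy2))
          · rcases Finset.mem_insert.mp hx1 with hx2 | hx2
            · subst hx2
              rcases Finset.mem_insert.mp hy with hy1 | hy1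
              · subst hy1; exact dist3_symm hd
              · rcases Finset.mem_insert.mp hy1 with hy2 | hy2
                · exact absurd hy2.symm hxy
                · exact dist3_symm (hcg y (Finset.mem_of_mem_erase hy2)
                    (Finset.ne_of_mem_erase hy2))
            · rcases Finset.mem_insert.mp hy with hy1 | hy1
              · subst hy1
                exact hcf x (Finset.mem_of_mem_erase hx2) (Finset.ne_of_mem_erase hx2)
              · rcases Finset.mem_insert.mp hy1 with hy2 | hy2
                · subst hy2
                  exact hcg x (Finset.mem_of_mem_erase hx2) (Finset.ne_of_mem_erase hx2)
                · exact hM.2 x (Finset.mem_of_mem_erase hx2) y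
                    (Finset.mem_of_mem_erase hy2) hxy
      have hpos : 0 < M.card := Finset.card_pos.mpr ⟨e, he⟩
      have := hcard _ hmatch
      rw [Finset.card_insert_of_notMem hfgM, Finset.card_insert_of_notMem hgM,
        Finset.card_erase_of_mem he] at this
      omega
  -- covered vertices
  set covA := M.image (fun e => e.1) with hcovA
  set covB := M.image (fun e => e.2.1) with hcovB
  set covC := M.image (fun e => e.2.2) with hcovC
  have hinjA : ∀ e ∈ M, ∀ e2 ∈ M, e.1 = e2.1 → e = e2 := by
    intro e he e2 he2 h
    by_contra hne
    exact (hM.2 e he e2 he2 hne).1 h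
  have hinjB : ∀ e ∈ M, ∀ e2 ∈ M, e.2.1 = e2.2.1 → e = e2 := by
    intro e he e2 he2 h
    by_contra hne
    exact (hM.2 e he e2 he2 hne).2.1 h
  have hinjC : ∀ e ∈ M, ∀ e2 ∈ M, e.2.2 = e2.2.2 → e = e2 := by
    intro e he e2 he2 h
    by_contra hne
    exact (hM.2 e he e2 he2 hne).2.2 h
  have hcA : covA.card = M.card :=
    Finset.card_image_of_injOn (fun e he e2 he2 h => hinjA e he e2 he2 h)
  have hcB : covB.card = M.card :=
    Finset.card_image_of_injOn (fun e he e2 he2 h => hinjB e he e2 he2 h)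
  have hcC : covC.card = M.card :=
    Finset.card_image_of_injOn (fun e he e2 he2 h => hinjC e he e2 he2 h)
  -- the real-valued covering count
  set t : (Fin n × Fin n × Fin n) → ℝ := fun f =>
    (if f.1 ∈ covA then (1:ℝ) else 0) + (if f.2.1 ∈ covB then (1:ℝ) else 0)
      + (if f.2.2 ∈ covC then (1:ℝ) else 0) with ht
  -- inequality 1 : ∑ w t ≤ 3 m d
  have ineq1 : (∑ f ∈ H, w f * t f) ≤ 3 * ((M.card : ℝ) * d) := by
    have e1 : ∀ f, w f * t f = (if f.1 ∈ covA then w f else 0)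
        + (if f.2.1 ∈ covB then w f else 0) + (if f.2.2 ∈ covC then w f else 0) := by
      intro f
      simp only [ht]
      by_cases h1 : f.1 ∈ covA <;> by_cases h2 : f.2.1 ∈ covB <;>
        by_cases h3 : f.2.2 ∈ covC <;> simp [h1, h2, h3] <;> ring
    have e2 : (∑ f ∈ H, w f * t f) = (∑ f ∈ H, if f.1 ∈ covA then w f else 0)
        + (∑ f ∈ H, if f.2.1 ∈ covB then w f else 0)
        + (∑ f ∈ H, if f.2.2 ∈ covC then w f else 0) := by
      rw [← Finset.sum_add_distrib, ← Finset.sum_add_distrib]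
      exact Finset.sum_congr rfl fun f _ => e1 f
    have b1 := indSum H w d hw0 covA (fun f => f.1) hdA
    have b2 := indSum H w d hw0 covB (fun f => f.2.1) hdB
    have b3 := indSum H w d hw0 covC (fun f => f.2.2) hdC
    rw [hcA] at b1
    rw [hcB] at b2
    rw [hcC] at b3
    rw [e2]
    linarith
  -- blocks
  set BG : (Fin n × Fin n × Fin n) → Finset (Fin n × Fin n × Fin n) := fun e =>
    H.filter (fun f => (f.1 ∈ covA → f.1 = e.1) ∧ (f.2.1 ∈ covB → f.2.1 = e.2.1)
      ∧ (f.2.2 ∈ covC → f.2.2 = e.2.2) ∧ ¬ dist3 e f) with hBG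
  have blkprops : ∀ e ∈ M, ∀ f ∈ BG e, ∀ e2 ∈ M, e2 ≠ e → dist3 e2 f := by
    intro e he f hf e2 he2 hne
    obtain ⟨hfH, h1, h2, h3, h4⟩ := Finset.mem_filter.mp hf
    refine ⟨?_, ?_, ?_⟩
    · intro heq
      have : f.1 ∈ covA := Finset.mem_image.mpr ⟨e2, he2, heq⟩
      exact hne (hinjA e2 he2 e he (heq.trans (h1 this)))
    · intro heq
      have : f.2.1 ∈ covB := Finset.mem_image.mpr ⟨e2, he2, heq⟩
      exact hne (hinjB e2 he2 e he (heq.trans (h2 this)))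
    · intro heq
      have : f.2.2 ∈ covC := Finset.mem_image.mpr ⟨e2, he2, heq⟩
      exact hne (hinjC e2 he2 e he (heq.trans (h3 this)))
  -- inequality 2 : ∑ w (2 - t) ≤ m d
  have ineq2 : (∑ f ∈ H, w f * (2 - t f)) ≤ (M.card : ℝ) * d := by
    set B := M.biUnion BG with hB
    have hBH : B ⊆ H := by
      rw [hB]
      exact Finset.biUnion_subset.mpr fun e _ => Finset.filter_subset _ _
    have hsplit : (∑ f ∈ H, w f * (2 - t f))
        = (∑ f ∈ H \ B, w f * (2 - t f)) + ∑ f ∈ B, w f * (2 - t f) :=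
      (Finset.sum_sdiff hBH).symm
    have hnonpos : (∑ f ∈ H \ B, w f * (2 - t f)) ≤ 0 := by
      apply Finset.sum_nonpos
      intro f hf
      obtain ⟨hfH, hfB⟩ := Finset.mem_sdiff.mp hf
      have ht2 : (2:ℝ) ≤ t f := by
        obtain ⟨e₁, he₁, hme₁⟩ := factA f hfH
        by_cases m1 : f.1 ∈ covA <;> by_cases m2 : f.2.1 ∈ covB <;>
          by_cases m3 : f.2.2 ∈ covC
        · simp only [ht]; simp only [if_pos m1, if_pos m2, if_pos m3]; norm_num
        · simp only [ht]; simp only [if_pos m1, if_pos m2, if_neg m3]; norm_num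
        · simp only [ht]; simp only [if_pos m1, if_neg m2, if_pos m3]; norm_num
        · exfalso
          obtain ⟨e₂, he₂, he₂eq⟩ := Finset.mem_image.mp m1
          apply hfB
          rw [hB]
          apply Finset.mem_biUnion.mpr
          refine ⟨e₂, he₂, ?_⟩
          rw [hBG]
          exact Finset.mem_filter.mpr ⟨hfH, ⟨fun _ => he₂eq.symm, fun h => absurd h m2,
            fun h => absurd h m3, not_dist3' (Or.inl he₂eq)⟩⟩
        · simp only [ht]; simp only [if_neg m1, if_pos m2, if_pos m3]; norm_num
        · exfalso
          obtain ⟨e₂, he₂, he₂eq⟩ := Finset.mem_image.mp m2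
          apply hfB
          rw [hB]
          apply Finset.mem_biUnion.mpr
          refine ⟨e₂, he₂, ?_⟩
          rw [hBG]
          exact Finset.mem_filter.mpr ⟨hfH, ⟨fun h => absurd h m1, fun _ => he₂eq.symm,
            fun h => absurd h m3, not_dist3' (Or.inr (Or.inl he₂eq))⟩⟩
        · exfalso
          obtain ⟨e₂, he₂, he₂eq⟩ := Finset.mem_image.mp m3
          apply hfB
          rw [hB]
          apply Finset.mem_biUnion.mpr
          refine ⟨e₂, he₂, ?_⟩
          rw [hBG]
          exact Finset.mem_filter.mpr ⟨hfH, ⟨fun h => absurd h m1, fun h => absurd h m2,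
            fun _ => he₂eq.symm, not_dist3' (Or.inr (Or.inr he₂eq))⟩⟩
        · exfalso
          rcases not_dist3 hme₁ with h | h | h
          · exact m1 (Finset.mem_image.mpr ⟨e₁, he₁, h⟩)
          · exact m2 (Finset.mem_image.mpr ⟨e₁, he₁, h⟩)
          · exact m3 (Finset.mem_image.mpr ⟨e₁, he₁, h⟩)
      have := hw0 f
      nlinarith
    have hdisj : (↑M : Set (Fin n × Fin n × Fin n)).PairwiseDisjoint BG := by
      intro e he e2 he2 hne
      rw [Function.onFun]
      rw [Finset.disjoint_left]
      intro f hfe hfe2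
      obtain ⟨hfH, h1, h2, h3, h4⟩ := Finset.mem_filter.mp hfe
      obtain ⟨-, h1b, h2b, h3b, h4b⟩ := Finset.mem_filter.mp hfe2
      have heM : e ∈ M := he
      have he2M : e2 ∈ M := he2
      rcases not_dist3 h4 with h | h | h
      · have hm : f.1 ∈ covA := Finset.mem_image.mpr ⟨e, heM, h⟩
        exact hne (hinjA e heM e2 he2M ((h1 hm).symm.trans (h1b hm)))
      · have hm : f.2.1 ∈ covB := Finset.mem_image.mpr ⟨e, heM, h⟩
        exact hne (hinjB e heM e2 he2M ((h2 hm).symm.trans (h2b hm)))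
      · have hm : f.2.2 ∈ covC := Finset.mem_image.mpr ⟨e, heM, h⟩
        exact hne (hinjC e heM e2 he2M ((h3 hm).symm.trans (h3b hm)))
    have hbiu : (∑ f ∈ B, w f * (2 - t f)) = ∑ e ∈ M, ∑ f ∈ BG e, w f * (2 - t f) := by
      rw [hB]
      exact Finset.sum_biUnion hdisj
    have hblock : ∀ e ∈ M, (∑ f ∈ BG e, w f * (2 - t f)) ≤ d := by
      intro e he
      have heBG : e ∈ BG e := by
        rw [hBG]
        exact Finset.mem_filter.mpr ⟨hM.1 he, ⟨fun _ => rfl, fun _ => rfl, fun _ => rfl,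
          not_dist3' (Or.inl rfl)⟩⟩
      have hconv : (∑ f ∈ BG e, w f * (2 - t f))
          = ∑ f ∈ BG e, w f * (2 - ((if f.1 = e.1 then (1:ℝ) else 0)
            + (if f.2.1 = e.2.1 then (1:ℝ) else 0) + (if f.2.2 = e.2.2 then (1:ℝ) else 0))) := by
        apply Finset.sum_congr rfl
        intro f hf
        obtain ⟨hfH, h1, h2, h3, h4⟩ := Finset.mem_filter.mp hf
        have i1 : (f.1 ∈ covA) ↔ (f.1 = e.1) :=
          ⟨h1, fun h => Finset.mem_image.mpr ⟨e, he, h.symm⟩⟩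
        have i2 : (f.2.1 ∈ covB) ↔ (f.2.1 = e.2.1) :=
          ⟨h2, fun h => Finset.mem_image.mpr ⟨e, he, h.symm⟩⟩
        have i3 : (f.2.2 ∈ covC) ↔ (f.2.2 = e.2.2) :=
          ⟨h3, fun h => Finset.mem_image.mpr ⟨e, he, h.symm⟩⟩
        simp only [ht]
        rw [if_congr i1 rfl rfl, if_congr i2 rfl rfl, if_congr i3 rfl rfl]
      rw [hconv]
      have heG2 : (e.1, e.2.1, e.2.2) ∈ BG e := by
        have hee : (e.1, e.2.1, e.2.2) = e := rfl
        rw [hee]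
        exact heBG
      exact blockB w d hw0 hd0 hdA hdB hdC (BG e) e.1 e.2.1 e.2.2 heG2
        (fun f hf => factB e he f (Finset.mem_of_mem_filter f hf)
          (blkprops e he f hf))
        (fun f hf g hg hfg => factC e he f (Finset.mem_of_mem_filter f hf) g
          (Finset.mem_of_mem_filter g hg) hfg (blkprops e he f hf) (blkprops e he g hg))
        (fun f hf => (Finset.mem_filter.mp hf).2.2.2.2)
    have hsum2 : (∑ f ∈ B, w f * (2 - t f)) ≤ (M.card : ℝ) * d := by
      rw [hbiu]
      calc (∑ e ∈ M, ∑ f ∈ BG e, w f * (2 - t f)) ≤ ∑ _e ∈ M, d :=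
            Finset.sum_le_sum fun e he => hblock e he
        _ = (M.card : ℝ) * d := by rw [Finset.sum_const, nsmul_eq_mul]
    linarith [hsplit, hnonpos, hsum2]
  -- combine
  refine ⟨M, hM, ?_⟩
  have hcomb : 2 * (∑ f ∈ H, w f) = (∑ f ∈ H, w f * (2 - t f)) + ∑ f ∈ H, w f * t f := by
    rw [← Finset.sum_add_distrib, Finset.mul_sum]
    apply Finset.sum_congr rfl
    intro f _
    ring
  linarith [ineq1, ineq2, hcomb]

/-! ### The extremal construction -/

/-- block-parity hypergraph : all coordinates in the same block `{2k, 2k+1}`,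
with even coordinate sum. -/
def Hq (n : ℕ) : Finset (Fin n × Fin n × Fin n) :=
  Finset.univ.filter (fun e => e.1.val / 2 = e.2.1.val / 2 ∧ e.2.1.val / 2 = e.2.2.val / 2
    ∧ (e.1.val + e.2.1.val + e.2.2.val) % 2 = 0)

noncomputable def fq (n : ℕ) : Fin n × Fin n × Fin n → ℝ := fun e =>
  if e ∈ Hq n then (if 2 * (e.1.val / 2) + 1 < n then (1/2 : ℝ) else 1) else 0

lemma mem_Hq {e : Fin n × Fin n × Fin n} :
    e ∈ Hq n ↔ (e.1.val / 2 = e.2.1.val / 2 ∧ e.2.1.val / 2 = e.2.2.val / 2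
      ∧ (e.1.val + e.2.1.val + e.2.2.val) % 2 = 0) := by
  unfold Hq
  simp

lemma mem_Hq3 {x y z : Fin n} :
    (x, y, z) ∈ Hq n ↔ (x.val / 2 = y.val / 2 ∧ y.val / 2 = z.val / 2
      ∧ (x.val + y.val + z.val) % 2 = 0) := mem_Hq

lemma fq_nonneg (e : Fin n × Fin n × Fin n) : 0 ≤ fq n e := by
  unfold fq
  split_ifs <;> norm_num

lemma fq_sym12 (x y z : Fin n) : fq n (x, y, z) = fq n (y, x, z) := by
  by_cases h : (x, y, z) ∈ Hq n
  · obtain ⟨hm1, hm2, hm3⟩ := mem_Hq3.mp h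
    have h2 : (y, x, z) ∈ Hq n := by
      rw [mem_Hq3]
      refine ⟨?_, ?_, ?_⟩ <;> omega
    unfold fq
    rw [if_pos h, if_pos h2]
    show (if 2 * (x.val / 2) + 1 < n then (1/2 : ℝ) else 1)
      = (if 2 * (y.val / 2) + 1 < n then (1/2 : ℝ) else 1)
    rw [hm1]
  · have h2 : (y, x, z) ∉ Hq n := by
      intro hc
      obtain ⟨hm1, hm2, hm3⟩ := mem_Hq3.mp hc
      apply h
      rw [mem_Hq3]
      refine ⟨?_, ?_, ?_⟩ <;> omega
    unfold fq
    rw [if_neg h, if_neg h2]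

lemma fq_sym13 (x y z : Fin n) : fq n (x, y, z) = fq n (z, y, x) := by
  by_cases h : (x, y, z) ∈ Hq n
  · obtain ⟨hm1, hm2, hm3⟩ := mem_Hq3.mp h
    have h2 : (z, y, x) ∈ Hq n := by
      rw [mem_Hq3]
      refine ⟨?_, ?_, ?_⟩ <;> omega
    unfold fq
    rw [if_pos h, if_pos h2]
    show (if 2 * (x.val / 2) + 1 < n then (1/2 : ℝ) else 1)
      = (if 2 * (z.val / 2) + 1 < n then (1/2 : ℝ) else 1)
    have hxz : x.val / 2 = z.val / 2 := by omega
    rw [hxz]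
  · have h2 : (z, y, x) ∉ Hq n := by
      intro hc
      obtain ⟨hm1, hm2, hm3⟩ := mem_Hq3.mp hc
      apply h
      rw [mem_Hq3]
      refine ⟨?_, ?_, ?_⟩ <;> omega
    unfold fq
    rw [if_neg h, if_neg h2]

/-- the basic degree computation -/
lemma degq_core (v : Fin n) : (∑ y : Fin n, ∑ z : Fin n, fq n (v, y, z)) = 1 := by
  classical
  set b := v.val / 2 with hb
  have hvlt : v.val < n := v.isLt
  have hinner : ∀ y : Fin n, (∑ z : Fin n, fq n (v, y, z))
      = if y.val / 2 = b then (if 2 * b + 1 < n then (1/2 : ℝ) else 1) else 0 := by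
    intro y
    by_cases hy : y.val / 2 = b
    · rw [if_pos hy]
      have hylt : y.val < n := y.isLt
      have hz0n : 2 * b + (v.val + y.val) % 2 < n := by omega
      set z₀ : Fin n := ⟨2 * b + (v.val + y.val) % 2, hz0n⟩ with hz₀
      have key : ∀ z : Fin n, fq n (v, y, z)
          = if z = z₀ then (if 2 * b + 1 < n then (1/2 : ℝ) else 1) else 0 := by
        intro z
        by_cases hz : z = z₀
        · subst hz
          rw [if_pos rfl]
          have hmem : (v, y, z₀) ∈ Hq n := by
            rw [mem_Hq3]
            refine ⟨?_, ?_, ?_⟩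
            · exact hy.symm
            · show y.val / 2 = (2 * b + (v.val + y.val) % 2) / 2
              omega
            · show (v.val + y.val + (2 * b + (v.val + y.val) % 2)) % 2 = 0
              omega
          unfold fq
          rw [if_pos hmem]
        · rw [if_neg hz]
          unfold fq
          rw [if_neg]
          intro hc
          obtain ⟨h1, h2, h3⟩ := mem_Hq3.mp hc
          apply hz
          have : z.val = 2 * b + (v.val + y.val) % 2 := by omega
          exact Fin.ext this
      calc (∑ z : Fin n, fq n (v, y, z))
          = ∑ z : Fin n, if z = z₀ then (if 2 * b + 1 < n then (1/2 : ℝ) else 1) else 0 :=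
            Finset.sum_congr rfl fun z _ => key z
        _ = if 2 * b + 1 < n then (1/2 : ℝ) else 1 := by
            rw [Finset.sum_ite_eq' Finset.univ z₀ (fun _ => if 2 * b + 1 < n then (1/2 : ℝ) else 1)]
            simp
    · rw [if_neg hy]
      apply Finset.sum_eq_zero
      intro z _
      unfold fq
      rw [if_neg]
      intro hc
      exact hy (mem_Hq3.mp hc).1.symm
  rw [Finset.sum_congr rfl fun y _ => hinner y]
  rw [← Finset.sum_filter]
  rw [Finset.sum_const]
  have hcount : (Finset.univ.filter (fun y : Fin n => y.val / 2 = b)).card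
      = if 2 * b + 1 < n then 2 else 1 := by
    by_cases hbn : 2 * b + 1 < n
    · rw [if_pos hbn]
      have hset : Finset.univ.filter (fun y : Fin n => y.val / 2 = b)
          = {(⟨2 * b, by omega⟩ : Fin n), ⟨2 * b + 1, hbn⟩} := by
        ext y
        simp only [Finset.mem_filter, Finset.mem_univ, true_and, Finset.mem_insert,
          Finset.mem_singleton, Fin.ext_iff]
        have := y.isLt
        omega
      rw [hset]
      rw [Finset.card_pair]
      simp [Fin.ext_iff]
    · rw [if_neg hbn]
      have hset : Finset.univ.filter (fun y : Fin n => y.val / 2 = b)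
          = {(⟨2 * b, by omega⟩ : Fin n)} := by
        ext y
        simp only [Finset.mem_filter, Finset.mem_univ, true_and, Finset.mem_singleton,
          Fin.ext_iff]
        have := y.isLt
        omega
      rw [hset, Finset.card_singleton]
  rw [hcount]
  by_cases hbn : 2 * b + 1 < n
  · rw [if_pos hbn, if_pos hbn]
    norm_num
  · rw [if_neg hbn, if_neg hbn]
    norm_num

lemma deg_pull (g : Fin n → ℝ) (v : Fin n) :
    (∑ x : Fin n, if x = v then g x else 0) = g v := by
  rw [Finset.sum_ite_eq' Finset.univ v g]
  simp

lemma degqA (v : Fin n) : (∑ e : Fin n × Fin n × Fin n, if e.1 = v then fq n e else 0) = 1 := by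
  rw [Fintype.sum_prod_type]
  have h1 : ∀ x : Fin n, (∑ p : Fin n × Fin n, if (x, p).1 = v then fq n (x, p) else 0)
      = if x = v then (∑ p : Fin n × Fin n, fq n (x, p)) else 0 := by
    intro x
    by_cases hx : x = v
    · simp only [if_pos hx]
    · simp only [if_neg hx, Finset.sum_const_zero]
  rw [Finset.sum_congr rfl fun x _ => h1 x]
  rw [deg_pull (fun x => ∑ p : Fin n × Fin n, fq n (x, p)) v]
  rw [Fintype.sum_prod_type]
  exact degq_core v

lemma degqB (v : Fin n) : (∑ e : Fin n × Fin n × Fin n, if e.2.1 = v then fq n e else 0) = 1 := by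
  rw [Fintype.sum_prod_type]
  have h1 : ∀ x : Fin n, (∑ p : Fin n × Fin n, if (x, p).2.1 = v then fq n (x, p) else 0)
      = ∑ z : Fin n, if True then fq n (x, v, z) else 0 := by
    intro x
    rw [Fintype.sum_prod_type]
    have h2 : ∀ y : Fin n, (∑ z : Fin n, if (x, y, z).2.1 = v then fq n (x, y, z) else 0)
        = if y = v then (∑ z : Fin n, fq n (x, y, z)) else 0 := by
      intro y
      by_cases hy : y = v
      · simp only [if_pos hy]
      · simp only [if_neg hy, Finset.sum_const_zero]
    rw [Finset.sum_congr rfl fun y _ => h2 y]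
    rw [deg_pull (fun y => ∑ z : Fin n, fq n (x, y, z)) v]
    simp
  rw [Finset.sum_congr rfl fun x _ => h1 x]
  simp only [if_true]
  have h3 : ∀ x : Fin n, (∑ z : Fin n, fq n (x, v, z)) = ∑ z : Fin n, fq n (v, x, z) :=
    fun x => Finset.sum_congr rfl fun z _ => fq_sym12 x v z
  rw [Finset.sum_congr rfl fun x _ => h3 x]
  exact degq_core v

lemma degqC (v : Fin n) : (∑ e : Fin n × Fin n × Fin n, if e.2.2 = v then fq n e else 0) = 1 := by
  rw [Fintype.sum_prod_type]
  have h1 : ∀ x : Fin n, (∑ p : Fin n × Fin n, if (x, p).2.2 = v then fq n (x, p) else 0)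
      = ∑ y : Fin n, fq n (x, y, v) := by
    intro x
    rw [Fintype.sum_prod_type]
    apply Finset.sum_congr rfl
    intro y _
    have h2 : (∑ z : Fin n, if (x, y, z).2.2 = v then fq n (x, y, z) else 0)
        = ∑ z : Fin n, if z = v then fq n (x, y, z) else 0 := rfl
    rw [h2, deg_pull (fun z => fq n (x, y, z)) v]
  rw [Finset.sum_congr rfl fun x _ => h1 x]
  have h3 : ∀ x : Fin n, (∑ y : Fin n, fq n (x, y, v)) = ∑ y : Fin n, fq n (v, y, x) :=
    fun x => Finset.sum_congr rfl fun y _ => fq_sym13 x y v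
  rw [Finset.sum_congr rfl fun x _ => h3 x]
  rw [Finset.sum_comm]
  exact degq_core v

/-- the canonical diagonal matching -/
def Mq (n : ℕ) : Finset (Fin n × Fin n × Fin n) :=
  Finset.univ.filter (fun e => e.1 = e.2.1 ∧ e.2.1 = e.2.2 ∧ e.1.val % 2 = 0)

lemma mem_Mq {e : Fin n × Fin n × Fin n} :
    e ∈ Mq n ↔ (e.1 = e.2.1 ∧ e.2.1 = e.2.2 ∧ e.1.val % 2 = 0) := by
  unfold Mq
  simp

def mkq (n k : ℕ) (h : 2 * k < n) : Fin n × Fin n × Fin n :=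
  ((⟨2 * k, h⟩ : Fin n), ⟨2 * k, h⟩, ⟨2 * k, h⟩)

lemma Mq_subset : Mq n ⊆ Hq n := by
  intro e he
  obtain ⟨h1, h2, h3⟩ := mem_Mq.mp he
  rw [mem_Hq]
  have v1 : e.1.val = e.2.1.val := congrArg Fin.val h1
  have v2 : e.2.1.val = e.2.2.val := congrArg Fin.val h2
  refine ⟨by omega, by omega, by omega⟩

lemma Mq_matching : TriMatching (Hq n) (Mq n) := by
  constructor
  · exact Mq_subset
  · intro e he g hg hne
    obtain ⟨he1, he2, he3⟩ := mem_Mq.mp he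
    obtain ⟨hg1, hg2, hg3⟩ := mem_Mq.mp hg
    have hx : e.1 ≠ g.1 := by
      intro h
      apply hne
      have : e = (e.1, e.2.1, e.2.2) := rfl
      have hg' : g = (g.1, g.2.1, g.2.2) := rfl
      rw [this, hg']
      rw [← he1, ← hg1, ← he2, ← hg2, ← he1, ← hg1, h]
    exact ⟨hx, by rw [← he1, ← hg1]; exact hx, by rw [← he2, ← he1, ← hg2, ← hg1]; exact hx⟩

lemma Mq_card : (Mq n).card = (n + 1) / 2 := by
  have hr : (n + 1) / 2 = (Finset.range ((n + 1) / 2)).card := (Finset.card_range _).symm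
  rw [hr]
  refine Finset.card_bij' (fun e _ => e.1.val / 2)
    (fun k hk => mkq n k (by have := Finset.mem_range.mp hk; omega)) ?hi ?hj ?left ?right
  case hi =>
    intro a ha
    have := (mem_Mq.mp ha).2.2
    have hlt := a.1.isLt
    rw [Finset.mem_range]
    show a.1.val / 2 < (n + 1) / 2
    omega
  case hj =>
    intro k hk
    rw [mem_Mq]
    refine ⟨rfl, rfl, ?_⟩
    show (2 * k) % 2 = 0
    omega
  case left =>
    intro a ha
    obtain ⟨h1, h2, h3⟩ := mem_Mq.mp ha
    obtain ⟨x, y, z⟩ := a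
    have hxy : x = y := h1
    have hyz : y = z := h2
    subst hxy
    subst hyz
    have hval : 2 * (x.val / 2) = x.val := by
      have h3' : x.val % 2 = 0 := h3
      omega
    show mkq n (x.val / 2) _ = (x, x, x)
    unfold mkq
    simp only [Prod.mk.injEq]
    refine ⟨Fin.ext hval, Fin.ext hval, Fin.ext hval⟩
  case right =>
    intro k hk
    show (2 * k) / 2 = k
    omega

lemma Hq_upper (M : Finset (Fin n × Fin n × Fin n)) (hM : TriMatching (Hq n) M) :
    M.card ≤ (n + 1) / 2 := by
  have : (n + 1) / 2 = (Finset.range ((n + 1) / 2)).card := (Finset.card_range _).symm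
  rw [this]
  apply Finset.card_le_card_of_injOn (fun e => e.1.val / 2)
  · intro e he
    rw [Finset.mem_coe, Finset.mem_range]
    show e.1.val / 2 < (n + 1) / 2
    have := e.1.isLt
    omega
  · intro e he g hg heq
    simp only [Finset.mem_coe] at he hg
    by_contra hne
    obtain ⟨hd1, hd2, hd3⟩ := hM.2 e he g hg hne
    have heH := hM.1 he
    have hgH := hM.1 hg
    obtain ⟨he1, he2, he3⟩ := mem_Hq.mp heH
    obtain ⟨hg1, hg2, hg3⟩ := mem_Hq.mp hgH
    have hv1 : e.1.val ≠ g.1.val := fun h => hd1 (Fin.ext h)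
    have hv2 : e.2.1.val ≠ g.2.1.val := fun h => hd2 (Fin.ext h)
    have hv3 : e.2.2.val ≠ g.2.2.val := fun h => hd3 (Fin.ext h)
    have heq' : e.1.val / 2 = g.1.val / 2 := heq
    omega

end BmNnnAux

theorem bm_nnn (n : ℕ) (hn : 1 ≤ n) :
    (∀ H : Finset (Fin n × Fin n × Fin n), TriFracBalanced H →
      ∃ M, TriMatching H M ∧ M.card = (n + 1) / 2) ∧
    (∃ H : Finset (Fin n × Fin n × Fin n), TriFracBalanced H ∧
      (∃ M, TriMatching H M ∧ M.card = (n + 1) / 2) ∧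
      ∀ M, TriMatching H M → M.card ≤ (n + 1) / 2) := by
  classical
  have hnpos : 0 < n := hn
  constructor
  · -- part (i)
    intro H hfb
    obtain ⟨f, ⟨hf0, hfv, hA, hB, hC⟩, hfne⟩ := hfb
    set v₀ : Fin n := ⟨0, hnpos⟩ with hv₀
    set dA : ℝ := ∑ e : Fin n × Fin n × Fin n, if e.1 = v₀ then f e else 0 with hdA
    set dB : ℝ := ∑ e : Fin n × Fin n × Fin n, if e.2.1 = v₀ then f e else 0 with hdB
    set dC : ℝ := ∑ e : Fin n × Fin n × Fin n, if e.2.2 = v₀ then f e else 0 with hdC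
    set T : ℝ := ∑ e : Fin n × Fin n × Fin n, f e with hT
    -- the three total-degree identities
    have hsumA : (∑ v : Fin n, ∑ e : Fin n × Fin n × Fin n, if e.1 = v then f e else 0) = T := by
      rw [Finset.sum_comm]
      apply Finset.sum_congr rfl
      intro e _
      rw [Finset.sum_ite_eq Finset.univ e.1 (fun _ => f e)]
      simp
    have hsumB : (∑ v : Fin n, ∑ e : Fin n × Fin n × Fin n, if e.2.1 = v then f e else 0) = T := by
      rw [Finset.sum_comm]
      apply Finset.sum_congr rfl
      intro e _
      rw [Finset.sum_ite_eq Finset.univ e.2.1 (fun _ => f e)]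
      simp
    have hsumC : (∑ v : Fin n, ∑ e : Fin n × Fin n × Fin n, if e.2.2 = v then f e else 0) = T := by
      rw [Finset.sum_comm]
      apply Finset.sum_congr rfl
      intro e _
      rw [Finset.sum_ite_eq Finset.univ e.2.2 (fun _ => f e)]
      simp
    have hnA : (n : ℝ) * dA = T := by
      rw [← hsumA, Finset.sum_congr rfl (fun v _ => hA v v₀), Finset.sum_const,
        Finset.card_univ, Fintype.card_fin, nsmul_eq_mul]
    have hnB : (n : ℝ) * dB = T := by
      rw [← hsumB, Finset.sum_congr rfl (fun v _ => hB v v₀), Finset.sum_const,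
        Finset.card_univ, Fintype.card_fin, nsmul_eq_mul]
    have hnC : (n : ℝ) * dC = T := by
      rw [← hsumC, Finset.sum_congr rfl (fun v _ => hC v v₀), Finset.sum_const,
        Finset.card_univ, Fintype.card_fin, nsmul_eq_mul]
    have hncast : (0 : ℝ) < (n : ℝ) := by exact_mod_cast hnpos
    have hBA : dB = dA := by
      have : (n : ℝ) * dB = (n : ℝ) * dA := by rw [hnA, hnB]
      exact mul_left_cancel₀ (ne_of_gt hncast) this
    have hCA : dC = dA := by
      have : (n : ℝ) * dC = (n : ℝ) * dA := by rw [hnA, hnC]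
      exact mul_left_cancel₀ (ne_of_gt hncast) this
    -- positivity
    have hTpos : 0 < T := by
      have hex : ∃ e, f e ≠ 0 := by
        by_contra hcon
        push_neg at hcon
        exact hfne (funext fun e => hcon e)
      obtain ⟨e₀, he₀⟩ := hex
      have hpos : 0 < f e₀ := lt_of_le_of_ne (hf0 e₀) (Ne.symm he₀)
      have : f e₀ ≤ T := Finset.single_le_sum (fun e _ => hf0 e) (Finset.mem_univ e₀)
      linarith
    have hdApos : 0 < dA := by
      by_contra hcon
      push_neg at hcon
      have hmul : (n : ℝ) * dA ≤ 0 := by nlinarith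
      rw [hnA] at hmul
      linarith
    -- apply the core theorem
    have hdegA : ∀ v, (∑ e : Fin n × Fin n × Fin n, if e.1 = v then f e else 0) ≤ dA :=
      fun v => le_of_eq (hA v v₀)
    have hdegB : ∀ v, (∑ e : Fin n × Fin n × Fin n, if e.2.1 = v then f e else 0) ≤ dA :=
      fun v => le_of_eq ((hB v v₀).trans hBA)
    have hdegC : ∀ v, (∑ e : Fin n × Fin n × Fin n, if e.2.2 = v then f e else 0) ≤ dA :=
      fun v => le_of_eq ((hC v v₀).trans hCA)
    obtain ⟨M, hM, hbound⟩ := BmNnnAux.core H f dA hf0 hfv (le_of_lt hdApos)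
      hdegA hdegB hdegC
    have hHT : (∑ e ∈ H, f e) = T := by
      rw [hT]
      exact Finset.sum_subset (Finset.subset_univ H) (fun e _ he => hfv e he)
    have hle : (n : ℝ) ≤ 2 * (M.card : ℝ) := by
      have h1 : (n : ℝ) * dA ≤ (2 * (M.card : ℝ)) * dA := by
        rw [hnA]
        calc T = ∑ e ∈ H, f e := hHT.symm
          _ ≤ 2 * (M.card : ℝ) * dA := hbound
      exact le_of_mul_le_mul_right h1 hdApos
    have hlen : n ≤ 2 * M.card := by exact_mod_cast hle
    obtain ⟨M2, hsub, hcard⟩ := Finset.exists_subset_card_eq (s := M) (n := (n + 1) / 2) (by omega)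
    exact ⟨M2, ⟨hsub.trans hM.1,
      fun e he g hg hneq => hM.2 e (hsub he) g (hsub hg) hneq⟩, hcard⟩
  · -- part (ii)
    refine ⟨BmNnnAux.Hq n, ⟨BmNnnAux.fq n, ⟨BmNnnAux.fq_nonneg, ?_, ?_, ?_, ?_⟩, ?_⟩,
      ⟨BmNnnAux.Mq n, BmNnnAux.Mq_matching, BmNnnAux.Mq_card⟩,
      fun M hM => BmNnnAux.Hq_upper M hM⟩
    · intro e he
      unfold BmNnnAux.fq
      rw [if_neg he]
    · intro v w
      rw [BmNnnAux.degqA v, BmNnnAux.degqA w]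
    · intro v w
      rw [BmNnnAux.degqB v, BmNnnAux.degqB w]
    · intro v w
      rw [BmNnnAux.degqC v, BmNnnAux.degqC w]
    · intro h0
      have he₀ : ((⟨0, hnpos⟩ : Fin n), (⟨0, hnpos⟩ : Fin n), (⟨0, hnpos⟩ : Fin n))
          ∈ BmNnnAux.Hq n := by
        rw [BmNnnAux.mem_Hq3]
        refine ⟨rfl, rfl, rfl⟩
      have := congrFun h0 ((⟨0, hnpos⟩ : Fin n), (⟨0, hnpos⟩ : Fin n), (⟨0, hnpos⟩ : Fin n))
      unfold BmNnnAux.fq at this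
      rw [if_pos he₀] at this
      simp only [Pi.zero_apply] at this
      split_ifs at this <;> norm_num at this
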